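/- Let ℓ ≥ 1, let M be the free ℤ-module ℤ^ℓ with standard basis e_1, …, e_ℓ, and let A = (a_{ij}) be an ℓ×ℓ integer matrix. For each i define the ℤ-linear operator s_i : M → M by s_i(e_j) = e_j − a_{ij} e_i, and let c = s_1 ∘ s_2 ∘ ⋯ ∘ s_ℓ. Let C be the matrix of c with respect to the basis (e_1, …, e_ℓ) (i.e., C_{ij} is the coefficient of e_i in c(e_j)), let I be the ℓ×ℓ identity matrix, and let U and V be the ℓ×ℓ matrices defined by u_{ij} = a_{ij} if i < j and u_{ij} = 0 otherwise, and v_{ij} = a_{ij} if i ≥ j and v_{ij} = 0 otherwise. Then (I + U)·C = I − V (equivalently, C = (I+U)^{-1}(I−V), the matrix I+U being unipotent upper triangular and hence invertible). -/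

import Mathlib

/-- For the operators `s i` on `ℤ^ℓ` defined by `s i (e j) = e j - A i j • e i`,
the matrix `C` of `c = s 1 ∘ ⋯ ∘ s ℓ` with respect to the standard basis satisfies
`(I + U) * C = I - V`, where `U` is the strict upper triangular part of `A` and `V` the
lower triangular part (including the diagonal). -/
theorem coxeter_element_matrix_formula (ℓ : ℕ) (hℓ : 1 ≤ ℓ)
    (A : Matrix (Fin ℓ) (Fin ℓ) ℤ)
    (s : Fin ℓ → Module.End ℤ (Fin ℓ → ℤ))
    (hs : ∀ i j : Fin ℓ, s i (Pi.single j 1) = Pi.single j 1 - A i j • Pi.single i 1)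
    (c : Module.End ℤ (Fin ℓ → ℤ)) (hc : c = ((List.finRange ℓ).map s).prod)
    (C : Matrix (Fin ℓ) (Fin ℓ) ℤ)
    (hC : C = LinearMap.toMatrix (Pi.basisFun ℤ (Fin ℓ)) (Pi.basisFun ℤ (Fin ℓ)) c)
    (U V : Matrix (Fin ℓ) (Fin ℓ) ℤ)
    (hU : ∀ i j : Fin ℓ, U i j = if i < j then A i j else 0)
    (hV : ∀ i j : Fin ℓ, V i j = if i < j then 0 else A i j) :
    (1 + U) * C = 1 - V := by
  classical
  -- the matrix of `s i`
  set S : Fin ℓ → Matrix (Fin ℓ) (Fin ℓ) ℤ :=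
    fun i => Matrix.of fun p q => (if p = q then (1:ℤ) else 0) - (if p = i then A i q else 0)
    with hSdef
  -- multiplication by `S i` on the right, entrywise
  have mulS : ∀ (X : Matrix (Fin ℓ) (Fin ℓ) ℤ) (i : Fin ℓ),
      X * S i = Matrix.of fun p q => X p q - X p i * A i q := by
    intro X i
    ext p q
    simp only [Matrix.mul_apply, hSdef, Matrix.of_apply, mul_sub, Finset.sum_sub_distrib,
      mul_ite, mul_one, mul_zero]
    rw [Finset.sum_ite_eq' (Finset.univ) q (fun r => X p r),
      Finset.sum_ite_eq' (Finset.univ) i (fun r => X p r * A i q)]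
    simp
  -- C is the product of the S i
  have hCprod : C = (((List.finRange ℓ).map S)).prod := by
    rw [hC, LinearMap.toMatrix_eq_toMatrix', hc]
    have : (LinearMap.toMatrix' : ((Fin ℓ → ℤ) →ₗ[ℤ] (Fin ℓ → ℤ)) → _)
        = (LinearMap.toMatrixAlgEquiv' : ((Fin ℓ → ℤ) →ₗ[ℤ] (Fin ℓ → ℤ)) ≃ₐ[ℤ] _) := rfl
    rw [this, map_list_prod, List.map_map]
    congr 1
    apply List.map_congr_left
    intro i _
    ext p q
    simp only [Function.comp_apply, LinearMap.toMatrixAlgEquiv'_apply]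
    have : (fun j' => if j' = q then (1:ℤ) else 0) = Pi.single q 1 := by
      ext j'; simp [Pi.single_apply]
    rw [hs]
    simp [hSdef, Pi.single_apply, Pi.sub_apply]
  -- suffix products
  set Q : ℕ → Matrix (Fin ℓ) (Fin ℓ) ℤ :=
    fun k => (((List.finRange ℓ).drop k).map S).prod with hQdef
  have hQsucc : ∀ k (hk : k < ℓ), Q k = S ⟨k, hk⟩ * Q (k + 1) := by
    intro k hk
    have hk' : k < (List.finRange ℓ).length := by simpa using hk
    rw [hQdef]
    simp only
    rw [List.drop_eq_getElem_cons hk']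
    simp [List.getElem_finRange]
  -- the truncated triangular parts
  set Uk : ℕ → Matrix (Fin ℓ) (Fin ℓ) ℤ :=
    fun k => Matrix.of fun i j => if k ≤ (i:ℕ) ∧ i < j then A i j else 0 with hUkdef
  set Vk : ℕ → Matrix (Fin ℓ) (Fin ℓ) ℤ :=
    fun k => Matrix.of fun i j => if k ≤ (i:ℕ) ∧ j ≤ i then A i j else 0 with hVkdef
  -- row-k lower part
  have EkQ : ∀ (k : ℕ), ∀ m t, t + m = ℓ → k < t →
      (Matrix.of fun p q : Fin ℓ => if (p:ℕ) = k ∧ q ≤ p then A p q else 0) * Q t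
      = (Matrix.of fun p q : Fin ℓ => if (p:ℕ) = k ∧ q ≤ p then A p q else 0) := by
    intro k m
    induction m with
    | zero =>
      intro t ht _
      have : Q t = 1 := by
        rw [hQdef]
        simp only
        rw [List.drop_eq_nil_of_le (by simp; omega)]
        simp
      rw [this, mul_one]
    | succ m ih =>
      intro t ht hkt
      have htℓ : t < ℓ := by omega
      rw [hQsucc t htℓ, ← mul_assoc, mulS]
      have h0 : (Matrix.of fun p q : Fin ℓ => if (p:ℕ) = k ∧ q ≤ p then A p q else 0)
          * S ⟨t, htℓ⟩ = (Matrix.of fun p q : Fin ℓ => if (p:ℕ) = k ∧ q ≤ p then A p q else 0) := by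
        rw [mulS]
        ext p q
        simp only [Matrix.of_apply]
        have : (if (p:ℕ) = k ∧ (⟨t, htℓ⟩ : Fin ℓ) ≤ p then A p ⟨t, htℓ⟩ else 0) = 0 := by
          rw [if_neg]
          rintro ⟨h1, h2⟩
          simp only [Fin.le_def, Fin.val_mk] at h2
          omega
        rw [this]
        ring
      rw [mulS] at h0
      rw [h0, ih (t+1) (by omega) (by omega)]
  -- main induction
  have key : ∀ m k, k + m = ℓ → (1 + Uk k) * Q k = 1 - Vk k := by
    intro m
    induction m with
    | zero =>
      intro k hk
      have hQ : Q k = 1 := by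
        rw [hQdef]
        simp only
        rw [List.drop_eq_nil_of_le (by simp; omega)]
        simp
      have hU0 : Uk k = 0 := by
        ext i j
        simp only [hUkdef, Matrix.of_apply, Matrix.zero_apply]
        rw [if_neg]
        rintro ⟨h1, _⟩
        have := i.isLt
        omega
      have hV0 : Vk k = 0 := by
        ext i j
        simp only [hVkdef, Matrix.of_apply, Matrix.zero_apply]
        rw [if_neg]
        rintro ⟨h1, _⟩
        have := i.isLt
        omega
      rw [hQ, hU0, hV0]
      simp
    | succ m ih =>
      intro k hk
      have hkℓ : k < ℓ := by omega
      rw [hQsucc k hkℓ, ← mul_assoc, mulS]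
      have hstep : (Matrix.of fun p q : Fin ℓ =>
            (1 + Uk k) p q - (1 + Uk k) p ⟨k, hkℓ⟩ * A ⟨k, hkℓ⟩ q)
          = (1 + Uk (k+1))
            - (Matrix.of fun p q : Fin ℓ => if (p:ℕ) = k ∧ q ≤ p then A p q else 0) := by
        ext p q
        simp only [Matrix.of_apply, Matrix.add_apply, Matrix.sub_apply, Matrix.one_apply,
          hUkdef]
        by_cases h1 : p = (⟨k, hkℓ⟩ : Fin ℓ)
        · subst h1
          by_cases h2 : q = (⟨k, hkℓ⟩ : Fin ℓ)
          · subst h2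
            simp only [Fin.lt_def, Fin.le_def, Fin.ext_iff, Fin.val_mk, true_and, and_true, le_refl, lt_irrefl, if_true, if_false, ite_true, ite_false]
            split_ifs <;> first | ring1 | omega | (exfalso; omega)
          · have h2' : (q:ℕ) ≠ k := fun h => h2 (Fin.ext h)
            simp only [Fin.lt_def, Fin.le_def, Fin.ext_iff, Fin.val_mk, true_and, and_true, le_refl, lt_irrefl, if_true, if_false, ite_true, ite_false]
            split_ifs <;> first | ring1 | omega | (exfalso; omega)
        · have h1' : (p:ℕ) ≠ k := fun h => h1 (Fin.ext h)
          simp only [Fin.lt_def, Fin.le_def, Fin.ext_iff, Fin.val_mk, true_and, and_true, le_refl, lt_irrefl, if_true, if_false, ite_true, ite_false]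
          split_ifs <;> first | ring1 | omega | (exfalso; omega)
      rw [hstep, sub_mul, ih (k+1) (by omega),
        EkQ k m (k+1) (by omega) (by omega)]
      have hVk : Vk k = Vk (k+1)
          + (Matrix.of fun p q : Fin ℓ => if (p:ℕ) = k ∧ q ≤ p then A p q else 0) := by
        ext p q
        simp only [hVkdef, Matrix.of_apply, Matrix.add_apply]
        simp only [Fin.le_def]
        split_ifs <;> first | ring1 | omega | (exfalso; omega)
      rw [hVk]
      abel
  have h0 : Uk 0 = U := by
    ext i j
    simp [hUkdef, hU i j]
  have h1 : Vk 0 = V := by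
    ext i j
    simp only [hVkdef, Matrix.of_apply, hV i j, Nat.zero_le, true_and]
    simp only [Fin.le_def, Fin.lt_def]
    split_ifs <;> first | ring1 | omega | (exfalso; omega)
  have h2 : Q 0 = C := by rw [hQdef, hCprod]; simp
  rw [← h0, ← h1, ← h2]
  exact key ℓ 0 (by omega)
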